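/- The average primal sequence of Algorithm (DG) satisfies, for all k ≥ 0, ‖û^k − u*‖² ≤ (1/(k+1)) · [ L_G ‖x^0‖² / σ_f + 4 L_G R_d (R_d + ‖x^0‖) / σ_f ]. -/

import Mathlib

open scoped RealInnerProductSpace

set_option maxHeartbeats 1000000


section Aux

variable {E : Type*} [NormedAddCommGroup E] [InnerProductSpace ℝ E]

lemma aux_strong_min {U : Set E} {φ : E → ℝ} {σ : ℝ}
    (hUcv : Convex ℝ U)
    (hsc : ∀ u ∈ U, ∀ v ∈ U, ∀ a b : ℝ, 0 ≤ a → 0 ≤ b → a + b = 1 →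
      φ (a • u + b • v) ≤ a * φ u + b * φ v - a * b * (σ / 2 * ‖u - v‖ ^ 2))
    {m : E} (hm : m ∈ U) (hmin : ∀ u ∈ U, φ m ≤ φ u) :
    ∀ u ∈ U, φ m + σ / 2 * ‖u - m‖ ^ 2 ≤ φ u := by
  intro u hu
  have key : ∀ t : ℝ, t ∈ Set.Ioo (0:ℝ) 1 →
      (1 - t) * (σ / 2 * ‖u - m‖ ^ 2) ≤ φ u - φ m := by
    intro t ht
    obtain ⟨ht0, ht1⟩ := ht
    have hb : (0:ℝ) ≤ 1 - t := by linarith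
    have h1 := hsc u hu m hm t (1 - t) ht0.le hb (by ring)
    have h2 := hmin _ (hUcv hu hm ht0.le hb (by ring))
    nlinarith
  have htend : Filter.Tendsto (fun t : ℝ => (1 - t) * (σ / 2 * ‖u - m‖ ^ 2))
      (nhdsWithin 0 (Set.Ioi (0:ℝ))) (nhds ((1 - 0) * (σ / 2 * ‖u - m‖ ^ 2))) := by
    apply Filter.Tendsto.mono_left _ nhdsWithin_le_nhds
    exact Continuous.tendsto (by continuity) 0
  have hev : ∀ᶠ t in nhdsWithin 0 (Set.Ioi (0:ℝ)),
      (1 - t) * (σ / 2 * ‖u - m‖ ^ 2) ≤ φ u - φ m := by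
    filter_upwards [Ioo_mem_nhdsGT_of_mem (Set.left_mem_Ico.2 zero_lt_one)] with t ht
    exact key t ht
  have := le_of_tendsto htend hev
  linarith

lemma aux_proj_vi {Ks : Set E} (hcv : Convex ℝ Ks) {z q : E} (hq : q ∈ Ks)
    (hmin : ∀ w ∈ Ks, ‖z - q‖ ≤ ‖z - w‖) : ∀ w ∈ Ks, ⟪z - q, w - q⟫ ≤ 0 := by
  haveI : Nonempty Ks := ⟨⟨q, hq⟩⟩
  have heq : ‖z - q‖ = ⨅ w : Ks, ‖z - w‖ := by
    apply le_antisymm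
    · exact le_ciInf fun w => hmin w w.2
    · have hbdd : BddBelow (Set.range fun w : Ks => ‖z - (w : E)‖) :=
        ⟨0, by rintro r ⟨w, rfl⟩; exact norm_nonneg _⟩
      exact ciInf_le hbdd ⟨q, hq⟩
  exact (norm_eq_iInf_iff_real_inner_le_zero hcv hq).1 heq

end Aux



theorem stmt_7 {n p : ℕ}
    (f : EuclideanSpace ℝ (Fin n) → ℝ) (σf : ℝ) (hσf : 0 < σf)
    (hfc : Continuous f) (hfsc : StrongConvexOn Set.univ σf f)
    (U : Set (EuclideanSpace ℝ (Fin n))) (hUne : U.Nonempty) (hUcl : IsClosed U) (hUcv : Convex ℝ U)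
    (G : EuclideanSpace ℝ (Fin n) →L[ℝ] EuclideanSpace ℝ (Fin p)) (hG : G ≠ 0) (g : EuclideanSpace ℝ (Fin p))
    (K : Set (EuclideanSpace ℝ (Fin p))) (hKne : K.Nonempty) (hKcl : IsClosed K) (hKcv : Convex ℝ K)
    (hKcone : ∀ c : ℝ, 0 ≤ c → ∀ v ∈ K, c • v ∈ K)
    (Kstar : Set (EuclideanSpace ℝ (Fin p)))
    (hKstar : Kstar = {x : EuclideanSpace ℝ (Fin p) | ∀ v ∈ K, 0 ≤ ⟪x, v⟫})
    (Lag : EuclideanSpace ℝ (Fin n) → EuclideanSpace ℝ (Fin p) → ℝ)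
    (hLag : ∀ u x, Lag u x = f u + ⟪x, -(G u) - g⟫)
    (uu : EuclideanSpace ℝ (Fin p) → EuclideanSpace ℝ (Fin n))
    (huu : ∀ x : EuclideanSpace ℝ (Fin p), uu x ∈ U ∧ ∀ u ∈ U, Lag (uu x) x ≤ Lag u x)
    (d : EuclideanSpace ℝ (Fin p) → ℝ) (hd : ∀ x, d x = Lag (uu x) x)
    (ustar : EuclideanSpace ℝ (Fin n))
    (hustar : ustar ∈ U ∧ G ustar + g ∈ K ∧ ∀ u ∈ U, G u + g ∈ K → f ustar ≤ f u)
    (fstar : ℝ) (hfstar : fstar = f ustar)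
    (Xstar : Set (EuclideanSpace ℝ (Fin p))) (hXstar : Xstar = {x ∈ Kstar | d x = fstar})
    (hXne : Xstar.Nonempty)
    (Ld : ℝ) (hLd : Ld = ‖G‖ ^ 2 / σf)
    (projKs : EuclideanSpace ℝ (Fin p) → EuclideanSpace ℝ (Fin p))
    (hprojKs : ∀ z : EuclideanSpace ℝ (Fin p), projKs z ∈ Kstar ∧ ∀ w ∈ Kstar, ‖z - projKs z‖ ≤ ‖z - w‖)
    (LG : ℝ) (hLG : Ld ≤ LG) (α : ℕ → ℝ)
    (hα : ∀ k, 1 / LG ≤ α k ∧ α k ≤ 1 / Ld)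
    (x : ℕ → EuclideanSpace ℝ (Fin p)) (hx0K : x 0 ∈ Kstar)
    (hxrec : ∀ k, x (k + 1) = projKs (x k + α k • (-(G (uu (x k))) - g)))
    (xstar : EuclideanSpace ℝ (Fin p)) (hxstar : xstar ∈ Xstar)
    (hxstarmin : ∀ z ∈ Xstar, ‖x 0 - xstar‖ ≤ ‖x 0 - z‖)
    (Rd : ℝ) (hRd : Rd = ‖x 0 - xstar‖)
    (S : ℕ → ℝ) (hS : ∀ k, S k = ∑ j ∈ Finset.range (k + 1), α j)
    (uhat : ℕ → EuclideanSpace ℝ (Fin n))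
    (huhat : ∀ k, uhat k = (S k)⁻¹ • ∑ j ∈ Finset.range (k + 1), α j • uu (x j))
 :
    ∀ k : ℕ,
      ‖uhat k - ustar‖ ^ 2 ≤
        (1 / ((k : ℝ) + 1)) *
          (LG * ‖x 0‖ ^ 2 / σf + 4 * LG * Rd * (Rd + ‖x 0‖) / σf) := by
  intro k
  have hGn : (0:ℝ) < ‖G‖ := norm_pos_iff.2 hG
  have hLd0 : 0 < Ld := by rw [hLd]; positivity
  have hLG0 : 0 < LG := lt_of_lt_of_le hLd0 hLG
  have hαpos : ∀ j, 0 < α j := fun j => lt_of_lt_of_le (by positivity) (hα j).1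
  have hαLd : ∀ j, α j * Ld ≤ 1 := fun j => (le_div_iff₀ hLd0).1 (hα j).2
  have hLdσ : Ld * σf = ‖G‖ ^ 2 := by rw [hLd]; field_simp
  have hKsm : ∀ y : EuclideanSpace ℝ (Fin p), y ∈ Kstar ↔ ∀ v ∈ K, 0 ≤ ⟪y, v⟫ := by
    intro y; rw [hKstar]; exact Iff.rfl
  have hKscv : Convex ℝ Kstar := by
    intro w hw w' hw' a b ha hb hab
    rw [hKsm] at hw hw' ⊢
    intro v hv
    rw [inner_add_left, real_inner_smul_left, real_inner_smul_left]
    exact add_nonneg (mul_nonneg ha (hw v hv)) (mul_nonneg hb (hw' v hv))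
  have hxK : ∀ j, x j ∈ Kstar := by
    intro j
    induction j with
    | zero => exact hx0K
    | succ j _ => rw [hxrec]; exact (hprojKs _).1
  -- strong convexity of Lag in its first argument
  have hLagsc : ∀ (y : EuclideanSpace ℝ (Fin p)) (u v : EuclideanSpace ℝ (Fin n)) (a b : ℝ),
      0 ≤ a → 0 ≤ b → a + b = 1 →
      Lag (a • u + b • v) y ≤ a * Lag u y + b * Lag v y - a * b * (σf / 2 * ‖u - v‖ ^ 2) := by
    intro y u v a b ha hb hab
    have hf' := hfsc.2 (Set.mem_univ u) (Set.mem_univ v) ha hb hab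
    simp only [smul_eq_mul] at hf'
    have hb1 : b = 1 - a := by linarith
    subst hb1
    have e : -(G (a • u + (1 - a) • v)) - g = a • (-(G u) - g) + (1 - a) • (-(G v) - g) := by
      rw [map_add, map_smul, map_smul]; module
    have hlin : ⟪y, -(G (a • u + (1 - a) • v)) - g⟫
        = a * ⟪y, -(G u) - g⟫ + (1 - a) * ⟪y, -(G v) - g⟫ := by
      rw [e, inner_add_right, real_inner_smul_right, real_inner_smul_right]
    rw [hLag, hLag, hLag, hlin]
    nlinarith [hf']
  have hmin_s : ∀ y : EuclideanSpace ℝ (Fin p), ∀ u ∈ U,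
      Lag (uu y) y + σf / 2 * ‖u - uu y‖ ^ 2 ≤ Lag u y := fun y =>
    aux_strong_min (φ := fun u => Lag u y) (σ := σf) hUcv (fun u _ v _ a b ha hb hab => hLagsc y u v a b ha hb hab)
      (huu y).1 (huu y).2
  -- descent lemma for the concave dual
  have hdescent : ∀ y z : EuclideanSpace ℝ (Fin p),
      d y + ⟪-(G (uu y)) - g, z - y⟫ - Ld / 2 * ‖z - y‖ ^ 2 ≤ d z := by
    intro y z
    have hdz : d z = Lag (uu z) y + ⟪z - y, -(G (uu z)) - g⟫ := by
      rw [hd, hLag, hLag, inner_sub_left]; ring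
    have hsplit : ⟪z - y, -(G (uu z)) - g⟫
        = ⟪z - y, -(G (uu y)) - g⟫ + ⟪z - y, G (uu y) - G (uu z)⟫ := by
      rw [← inner_add_right]; congr 1; abel
    have hCS : -(‖G‖ * ‖z - y‖ * ‖uu z - uu y‖) ≤ ⟪z - y, G (uu y) - G (uu z)⟫ := by
      rw [← map_sub]
      have h1 := abs_real_inner_le_norm (z - y) (G (uu y - uu z))
      have h2 := G.le_opNorm (uu y - uu z)
      have h4 := neg_abs_le ⟪z - y, G (uu y - uu z)⟫
      have h5 := mul_le_mul_of_nonneg_left h2 (norm_nonneg (z - y))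
      rw [norm_sub_rev (uu y) (uu z)] at h5
      nlinarith
    have hkey : 0 ≤ σf / 2 * ‖uu z - uu y‖ ^ 2 - ‖G‖ * ‖z - y‖ * ‖uu z - uu y‖
        + Ld / 2 * ‖z - y‖ ^ 2 := by
      have e : σf / 2 * ‖uu z - uu y‖ ^ 2 - ‖G‖ * ‖z - y‖ * ‖uu z - uu y‖
          + Ld / 2 * ‖z - y‖ ^ 2
          = (σf * ‖uu z - uu y‖ - ‖G‖ * ‖z - y‖) ^ 2 / (2 * σf) := by
        rw [hLd]; field_simp; ring
      rw [e]; positivity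
    have h5' := hmin_s y (uu z) (huu z).1
    rw [← hd] at h5'
    have hcomm : ⟪-(G (uu y)) - g, z - y⟫ = ⟪z - y, -(G (uu y)) - g⟫ := real_inner_comm _ _
    linarith
  -- weak duality
  have hweak : ∀ y ∈ Kstar, d y ≤ fstar := by
    intro y hy
    have h1 := (huu y).2 ustar hustar.1
    have h2 : ⟪y, -(G ustar) - g⟫ = -⟪y, G ustar + g⟫ := by
      rw [show -(G ustar) - g = -(G ustar + g) from by abel, inner_neg_right]
    have h3 : 0 ≤ ⟪y, G ustar + g⟫ := (hKsm y).1 hy _ hustar.2.1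
    rw [hd]
    refine h1.trans ?_
    rw [hLag, h2, hfstar]
    linarith
  -- facts about xstar
  obtain ⟨hxsKs, hdxs⟩ : xstar ∈ Kstar ∧ d xstar = fstar := by
    have := hxstar; rw [hXstar] at this; exact this
  have hLus : Lag ustar xstar ≤ fstar := by
    rw [hLag, hfstar, show -(G ustar) - g = -(G ustar + g) from by abel, inner_neg_right]
    have h3 : 0 ≤ ⟪xstar, G ustar + g⟫ := (hKsm xstar).1 hxsKs _ hustar.2.1
    linarith
  have hLus2 : Lag ustar xstar = fstar := by
    refine le_antisymm hLus ?_
    have h1 := (huu xstar).2 ustar hustar.1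
    rw [← hd] at h1
    linarith [hdxs ▸ h1]
  have huus : uu xstar = ustar := by
    have h5 := hmin_s xstar ustar hustar.1
    rw [← hd, hdxs, hLus2] at h5
    have h6 : ‖ustar - uu xstar‖ ^ 2 = 0 := by nlinarith [sq_nonneg ‖ustar - uu xstar‖]
    have h7 : ustar - uu xstar = 0 := by
      rw [pow_eq_zero_iff (two_ne_zero)] at h6
      exact norm_eq_zero.1 h6
    rw [← sub_eq_zero]
    rw [sub_eq_zero] at h7
    rw [h7]
    exact sub_self _
  -- the one-step inequality
  have hstep : ∀ j : ℕ,
      α j * (d (x j) - fstar) + α j * ⟪-(G (uu (x j))) - g, xstar - x j⟫ ≤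
        (‖x j - xstar‖ ^ 2 - ‖x (j + 1) - xstar‖ ^ 2) / 2
          + α j * (d (x (j + 1)) - fstar) := by
    intro j
    set q : EuclideanSpace ℝ (Fin p) := -(G (uu (x j))) - g with hq
    set z : EuclideanSpace ℝ (Fin p) := x j + α j • q with hz
    have hp : x (j + 1) = projKs z := hxrec j
    set P : EuclideanSpace ℝ (Fin p) := x (j + 1) with hP
    have hVI := aux_proj_vi hKscv (hprojKs z).1 (hprojKs z).2 xstar hxsKs
    rw [← hp] at hVI
    have hzP : z - P = (x j - P) + α j • q := by rw [hz]; abel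
    rw [hzP, inner_add_left, real_inner_smul_left] at hVI
    have hid : ⟪P - x j, xstar - P⟫
        = (‖x j - xstar‖ ^ 2 - ‖P - xstar‖ ^ 2 - ‖P - x j‖ ^ 2) / 2 := by
      have h1 : x j - xstar = (x j - P) + (P - xstar) := by abel
      have h2 : ‖x j - xstar‖ ^ 2
          = ‖x j - P‖ ^ 2 + 2 * ⟪x j - P, P - xstar⟫ + ‖P - xstar‖ ^ 2 := by
        rw [h1, norm_add_sq_real]
      have h3 : ⟪x j - P, P - xstar⟫ = ⟪P - x j, xstar - P⟫ := by
        rw [show x j - P = -(P - x j) from by abel,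
          show P - xstar = -(xstar - P) from by abel, inner_neg_neg]
      have h4 : ‖x j - P‖ = ‖P - x j‖ := norm_sub_rev _ _
      rw [h3, h4] at h2
      linarith
    have hneg : ⟪P - x j, xstar - P⟫ = -⟪x j - P, xstar - P⟫ := by
      rw [show P - x j = -(x j - P) from by abel, inner_neg_left]
    have hVIα : α j * ⟪q, xstar - P⟫
        ≤ (‖x j - xstar‖ ^ 2 - ‖P - xstar‖ ^ 2 - ‖P - x j‖ ^ 2) / 2 := by
      linarith [hid, hneg, hVI]
    have hdesc := hdescent (x j) P
    rw [← hq] at hdesc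
    have hαd : α j * ⟪q, P - x j⟫
        ≤ α j * (d P - d (x j)) + (α j * Ld) * (‖P - x j‖ ^ 2 / 2) := by
      have h := mul_le_mul_of_nonneg_left
        (show ⟪q, P - x j⟫ ≤ d P - d (x j) + Ld / 2 * ‖P - x j‖ ^ 2 from by linarith)
        (hαpos j).le
      linarith [h]
    have hαLd' : (α j * Ld) * (‖P - x j‖ ^ 2 / 2) ≤ ‖P - x j‖ ^ 2 / 2 :=
      mul_le_of_le_one_left (by positivity) (hαLd j)
    have hsplitin : α j * ⟪q, xstar - x j⟫
        = α j * ⟪q, xstar - P⟫ + α j * ⟪q, P - x j⟫ := by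
      rw [← mul_add, ← inner_add_right]
      congr 2
      abel
    linarith
  -- the per-term identity
  have hti : ∀ j : ℕ, d (x j) - fstar + ⟪-(G (uu (x j))) - g, xstar - x j⟫
      = f (uu (x j)) - fstar - ⟪xstar, G (uu (x j)) + g⟫ := by
    intro j
    have h1 : ⟪-(G (uu (x j))) - g, xstar - x j⟫
        = ⟪-(G (uu (x j))) - g, xstar⟫ - ⟪-(G (uu (x j))) - g, x j⟫ := inner_sub_right _ _ _
    have h2 : ⟪x j, -(G (uu (x j))) - g⟫ = ⟪-(G (uu (x j))) - g, x j⟫ := real_inner_comm _ _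
    have h3 : ⟪-(G (uu (x j))) - g, xstar⟫ = -⟪xstar, G (uu (x j)) + g⟫ := by
      rw [real_inner_comm, show -(G (uu (x j))) - g = -(G (uu (x j)) + g) from by abel,
        inner_neg_right]
    rw [hd, hLag]
    linarith [h1, h2, h3]
  -- summing up
  have hsum : ∑ j ∈ Finset.range (k + 1),
      α j * (f (uu (x j)) - fstar - ⟪xstar, G (uu (x j)) + g⟫) ≤ Rd ^ 2 / 2 := by
    have h1 : ∀ j ∈ Finset.range (k + 1),
        α j * (f (uu (x j)) - fstar - ⟪xstar, G (uu (x j)) + g⟫)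
        ≤ (‖x j - xstar‖ ^ 2 - ‖x (j + 1) - xstar‖ ^ 2) / 2
            + α j * (d (x (j + 1)) - fstar) := by
      intro j _
      have e : α j * (f (uu (x j)) - fstar - ⟪xstar, G (uu (x j)) + g⟫)
          = α j * (d (x j) - fstar) + α j * ⟪-(G (uu (x j))) - g, xstar - x j⟫ := by
        rw [← hti j]; ring
      rw [e]
      exact hstep j
    have h2 := Finset.sum_le_sum h1
    rw [Finset.sum_add_distrib] at h2
    have h3 : ∑ j ∈ Finset.range (k + 1), (‖x j - xstar‖ ^ 2 - ‖x (j + 1) - xstar‖ ^ 2) / 2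
        = (‖x 0 - xstar‖ ^ 2 - ‖x (k + 1) - xstar‖ ^ 2) / 2 := by
      rw [← Finset.sum_div, Finset.sum_range_sub' (fun i => ‖x i - xstar‖ ^ 2) (k + 1)]
    have h4 : ∑ j ∈ Finset.range (k + 1), α j * (d (x (j + 1)) - fstar) ≤ 0 := by
      refine Finset.sum_nonpos fun j _ => ?_
      have hwj := hweak _ (hxK (j + 1))
      nlinarith [(hαpos j).le]
    have h5 : 0 ≤ ‖x (k + 1) - xstar‖ ^ 2 := sq_nonneg _
    rw [hRd]
    linarith [h2, h3, h4, h5]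
  -- properties of S and the weights
  have hSpos : 0 < S k := by
    rw [hS]
    exact Finset.sum_pos (fun j _ => hαpos j) (Finset.nonempty_range_iff.2 (Nat.succ_ne_zero k))
  have hk1 : (0:ℝ) < (k : ℝ) + 1 := by positivity
  have hSlb : ((k : ℝ) + 1) / LG ≤ S k := by
    rw [hS]
    calc ((k : ℝ) + 1) / LG = ∑ _j ∈ Finset.range (k + 1), 1 / LG := by
          rw [Finset.sum_const, Finset.card_range, nsmul_eq_mul]
          push_cast; ring
      _ ≤ ∑ j ∈ Finset.range (k + 1), α j := Finset.sum_le_sum fun j _ => (hα j).1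
  have hw0 : ∀ j, 0 ≤ (S k)⁻¹ * α j := fun j =>
    mul_nonneg (inv_nonneg.2 hSpos.le) (hαpos j).le
  have hw1 : ∑ j ∈ Finset.range (k + 1), (S k)⁻¹ * α j = 1 := by
    rw [← Finset.mul_sum, ← hS]
    exact inv_mul_cancel₀ hSpos.ne'
  have huhat' : uhat k = ∑ j ∈ Finset.range (k + 1), ((S k)⁻¹ * α j) • uu (x j) := by
    rw [huhat, Finset.smul_sum]
    simp only [smul_smul]
  have huhatU : uhat k ∈ U := by
    rw [huhat']
    exact hUcv.sum_mem (fun j _ => hw0 j) hw1 (fun j _ => (huu (x j)).1)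
  have hconvf : ConvexOn ℝ Set.univ f := hfsc.convexOn fun r => by positivity
  have hjensen : f (uhat k) ≤ ∑ j ∈ Finset.range (k + 1), ((S k)⁻¹ * α j) * f (uu (x j)) := by
    rw [huhat']
    have := hconvf.map_sum_le (fun j (_ : j ∈ Finset.range (k + 1)) => hw0 j) hw1
      (fun j _ => Set.mem_univ (uu (x j)))
    simpa [smul_eq_mul] using this
  have hlin2 : ⟪xstar, G (uhat k) + g⟫
      = ∑ j ∈ Finset.range (k + 1), ((S k)⁻¹ * α j) * ⟪xstar, G (uu (x j)) + g⟫ := by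
    have e : G (uhat k) + g
        = ∑ j ∈ Finset.range (k + 1), ((S k)⁻¹ * α j) • (G (uu (x j)) + g) := by
      calc G (uhat k) + g
          = (∑ j ∈ Finset.range (k + 1), ((S k)⁻¹ * α j) • G (uu (x j)))
            + (∑ j ∈ Finset.range (k + 1), (S k)⁻¹ * α j) • g := by
            rw [huhat', map_sum, hw1, one_smul]
            simp only [map_smul]
        _ = ∑ j ∈ Finset.range (k + 1),
              (((S k)⁻¹ * α j) • G (uu (x j)) + ((S k)⁻¹ * α j) • g) := by
            rw [Finset.sum_smul, ← Finset.sum_add_distrib]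
        _ = ∑ j ∈ Finset.range (k + 1), ((S k)⁻¹ * α j) • (G (uu (x j)) + g) :=
            Finset.sum_congr rfl fun j _ => (smul_add _ _ _).symm
    rw [e, inner_sum]
    simp only [real_inner_smul_right]
  -- the primal gap bound
  have hgap : f (uhat k) - fstar - ⟪xstar, G (uhat k) + g⟫ ≤ (S k)⁻¹ * (Rd ^ 2 / 2) := by
    have e2 : ∑ j ∈ Finset.range (k + 1),
        ((S k)⁻¹ * α j) * (f (uu (x j)) - fstar - ⟪xstar, G (uu (x j)) + g⟫)
        = (∑ j ∈ Finset.range (k + 1), ((S k)⁻¹ * α j) * f (uu (x j)))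
          - (∑ j ∈ Finset.range (k + 1), (S k)⁻¹ * α j) * fstar
          - ∑ j ∈ Finset.range (k + 1), ((S k)⁻¹ * α j) * ⟪xstar, G (uu (x j)) + g⟫ := by
      rw [Finset.sum_mul, ← Finset.sum_sub_distrib, ← Finset.sum_sub_distrib]
      exact Finset.sum_congr rfl fun j _ => by ring
    rw [hw1, one_mul] at e2
    have e3 : ∑ j ∈ Finset.range (k + 1),
        ((S k)⁻¹ * α j) * (f (uu (x j)) - fstar - ⟪xstar, G (uu (x j)) + g⟫)
        = (S k)⁻¹ * ∑ j ∈ Finset.range (k + 1),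
            α j * (f (uu (x j)) - fstar - ⟪xstar, G (uu (x j)) + g⟫) := by
      rw [Finset.mul_sum]
      exact Finset.sum_congr rfl fun j _ => by ring
    have h7 := mul_le_mul_of_nonneg_left hsum (inv_nonneg.2 hSpos.le)
    rw [hlin2]
    linarith [e2, e3, hjensen, h7]
  -- strong convexity at the saddle point
  have hLx : Lag (uhat k) xstar = f (uhat k) - ⟪xstar, G (uhat k) + g⟫ := by
    rw [hLag, show -(G (uhat k)) - g = -(G (uhat k) + g) from by abel, inner_neg_right]
    ring
  have hfinal1 : σf / 2 * ‖uhat k - ustar‖ ^ 2 ≤ (S k)⁻¹ * (Rd ^ 2 / 2) := by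
    have h5 := hmin_s xstar (uhat k) huhatU
    rw [huus, hLus2, hLx] at h5
    linarith [hgap]
  -- final arithmetic
  have hR0 : 0 ≤ Rd := hRd ▸ norm_nonneg _
  have hx0n : 0 ≤ ‖x 0‖ := norm_nonneg _
  have h8 : ‖uhat k - ustar‖ ^ 2 ≤ (S k)⁻¹ * Rd ^ 2 / σf := by
    have h2σ : (0:ℝ) < 2 / σf := by positivity
    have h9 := mul_le_mul_of_nonneg_left hfinal1 h2σ.le
    have e4 : 2 / σf * (σf / 2 * ‖uhat k - ustar‖ ^ 2) = ‖uhat k - ustar‖ ^ 2 := by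
      field_simp
    have e5 : 2 / σf * ((S k)⁻¹ * (Rd ^ 2 / 2)) = (S k)⁻¹ * Rd ^ 2 / σf := by
      field_simp
    rw [e4, e5] at h9
    exact h9
  have hSinv : (S k)⁻¹ ≤ LG / ((k : ℝ) + 1) := by
    have h9 : (0:ℝ) < ((k : ℝ) + 1) / LG := by positivity
    have h10 := one_div_le_one_div_of_le h9 hSlb
    rw [one_div_div] at h10
    rw [one_div] at h10
    exact h10
  have key : LG * Rd ^ 2 ≤ LG * ‖x 0‖ ^ 2 + 4 * LG * Rd * (Rd + ‖x 0‖) := by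
    nlinarith [mul_nonneg (mul_nonneg hLG0.le hR0) hR0,
      mul_nonneg hLG0.le (sq_nonneg ‖x 0‖),
      mul_nonneg (mul_nonneg hLG0.le hR0) hx0n]
  have hσne : σf ≠ 0 := hσf.ne'
  have hkne : ((k : ℝ) + 1) ≠ 0 := hk1.ne'
  calc ‖uhat k - ustar‖ ^ 2 ≤ (S k)⁻¹ * Rd ^ 2 / σf := h8
    _ ≤ (LG / ((k : ℝ) + 1)) * Rd ^ 2 / σf := by gcongr
    _ ≤ (1 / ((k : ℝ) + 1)) * (LG * ‖x 0‖ ^ 2 / σf + 4 * LG * Rd * (Rd + ‖x 0‖) / σf) := by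
        have e1 : (LG / ((k : ℝ) + 1)) * Rd ^ 2 / σf
            = LG * Rd ^ 2 * (((k : ℝ) + 1) * σf)⁻¹ := by
          field_simp
        have e2 : (1 / ((k : ℝ) + 1)) * (LG * ‖x 0‖ ^ 2 / σf + 4 * LG * Rd * (Rd + ‖x 0‖) / σf)
            = (LG * ‖x 0‖ ^ 2 + 4 * LG * Rd * (Rd + ‖x 0‖)) * (((k : ℝ) + 1) * σf)⁻¹ := by
          field_simp
        rw [e1, e2]
        exact mul_le_mul_of_nonneg_right key (by positivity)
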